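/- (Block Policy Optimality.) In every multi-urn search model there exists a block policy that is optimal, i.e., there is an ordering v^1,…,v^m of the urns of V such that the block policy it determines has expected cost E[C] less than or equal to the expected cost of every valid policy. This holds for arbitrary distributions μ (arbitrary correlations among the urns). -/

import Mathlib

open Finset

variable {V : Type*} [Fintype V] [DecidableEq V]

/-- `phi μ U` is the probability that every urn in `U` contains a red marble:
the sum of `μ T` over all `T ⊇ U`. -/
noncomputable def phi (μ : Finset V → ℝ) (U : Finset V) : ℝ :=
  ∑ T ∈ univ.filter (fun T => U ⊆ T), μ T

/-- `Qfun N μ x` is the probability that no red marble appears among the first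
`x i` randomly drawn marbles of each urn `i`. -/
noncomputable def Qfun (N : V → ℕ) (μ : Finset V → ℝ) (x : V → ℕ) : ℝ :=
  ∑ T : Finset V, μ T * ∏ i ∈ T, (1 - (x i : ℝ) / (N i : ℝ))

/-- `Rfun N μ U x` is the probability that no red marble has been drawn and every
urn in `U` contains a red marble. -/
noncomputable def Rfun (N : V → ℕ) (μ : Finset V → ℝ) (U : Finset V) (x : V → ℕ) : ℝ :=
  ∑ T ∈ univ.filter (fun T => U ⊆ T), μ T * ∏ i ∈ T, (1 - (x i : ℝ) / (N i : ℝ))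

/-- A valid policy: a finite sequence of urn queries in which urn `i` occurs
exactly `N i` times. -/
def validPolicy (N : V → ℕ) (L : List V) : Prop := ∀ i, L.count i = N i

/-- Expected cost (expected number of blue marbles drawn) of a policy `L`. -/
noncomputable def ECost (N : V → ℕ) (μ : Finset V → ℝ) (L : List V) : ℝ :=
  ∑ t ∈ Finset.range L.length, Qfun N μ (fun i => (L.take (t + 1)).count i)

/-- The block policy determined by an ordering `v` of the urns: query urn `v 0`
for `N (v 0)` stages, then `v 1` for `N (v 1)` stages, and so on. -/
def blockPolicy (N : V → ℕ) (v : Fin (Fintype.card V) → V) : List V :=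
  (List.ofFn v).flatMap (fun i => List.replicate (N i) i)

noncomputable def Sfun (N : V → ℕ) (μ : Finset V → ℝ) (i : V) (x : V → ℕ) : ℝ :=
  ∑ T ∈ univ.filter (fun T => i ∈ T), μ T * ∏ k ∈ T.erase i, (1 - (x k : ℝ) / (N k : ℝ))

noncomputable def Qbar (N : V → ℕ) (μ : Finset V → ℝ) (i : V) (x : V → ℕ) : ℝ :=
  ∑ T ∈ univ.filter (fun T => i ∉ T), μ T * ∏ k ∈ T, (1 - (x k : ℝ) / (N k : ℝ))

lemma Q_decomp (N : V → ℕ) (μ : Finset V → ℝ) (i : V) (x : V → ℕ) :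
    Qfun N μ x = Qbar N μ i x + (1 - (x i : ℝ) / (N i : ℝ)) * Sfun N μ i x := by
  rw [Qfun, Qbar, Sfun, Finset.mul_sum]
  rw [← Finset.sum_filter_add_sum_filter_not univ (fun T => i ∉ T)]
  congr 1
  · apply Finset.sum_congr
    · ext T; simp
    · intro T hT
      simp only [Finset.mem_filter, not_not] at hT
      rw [← Finset.mul_prod_erase T _ hT.2]
      ring
lemma Sfun_update (N : V → ℕ) (μ : Finset V → ℝ) (i : V) (x : V → ℕ) (m : ℕ) :
    Sfun N μ i (Function.update x i m) = Sfun N μ i x := by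
  apply Finset.sum_congr rfl
  intro T hT
  congr 1
  apply Finset.prod_congr rfl
  intro k hk
  rw [Function.update_of_ne (Finset.ne_of_mem_erase hk)]

lemma Qbar_update (N : V → ℕ) (μ : Finset V → ℝ) (i : V) (x : V → ℕ) (m : ℕ) :
    Qbar N μ i (Function.update x i m) = Qbar N μ i x := by
  apply Finset.sum_congr rfl
  intro T hT
  simp only [Finset.mem_filter] at hT
  congr 1
  apply Finset.prod_congr rfl
  intro k hk
  rw [Function.update_of_ne (by rintro rfl; exact hT.2 hk)]

lemma Q_update (N : V → ℕ) (μ : Finset V → ℝ) (i : V) (x : V → ℕ) (m : ℕ) :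
    Qfun N μ (Function.update x i m) =
      Qbar N μ i x + (1 - (m : ℝ) / (N i : ℝ)) * Sfun N μ i x := by
  rw [Q_decomp N μ i, Qbar_update, Sfun_update, Function.update_self]

lemma Sfun_mono (N : V → ℕ) (μ : Finset V → ℝ) (hμ0 : ∀ T, 0 ≤ μ T) (hN : ∀ j, 1 ≤ N j)
    (i : V) (x y : V → ℕ) (hxy : ∀ k, x k ≤ y k) (hyN : ∀ k, k ≠ i → y k ≤ N k) :
    Sfun N μ i y ≤ Sfun N μ i x := by
  apply Finset.sum_le_sum
  intro T hT
  apply mul_le_mul_of_nonneg_left _ (hμ0 T)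
  apply Finset.prod_le_prod
  · intro k hk
    have hNk : (0:ℝ) < (N k : ℝ) := by exact_mod_cast (hN k)
    have : (y k : ℝ) ≤ (N k : ℝ) := by exact_mod_cast (hyN k (Finset.ne_of_mem_erase hk))
    have := div_le_one_of_le₀ this hNk.le
    linarith
  · intro k hk
    have hNk : (0:ℝ) < (N k : ℝ) := by exact_mod_cast (hN k)
    have hxyk : (x k : ℝ) ≤ (y k : ℝ) := by exact_mod_cast (hxy k)
    have : (x k : ℝ) / (N k : ℝ) ≤ (y k : ℝ) / (N k : ℝ) := by gcongr
    linarith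

noncomputable def seg (N : V → ℕ) (μ : Finset V → ℝ) (c : V → ℕ) (M : List V) : ℝ :=
  ∑ t ∈ Finset.range M.length, Qfun N μ (fun j => c j + (M.take (t + 1)).count j)

lemma ECost_eq_seg (N : V → ℕ) (μ : Finset V → ℝ) (L : List V) :
    ECost N μ L = seg N μ (fun _ => 0) L := by
  simp [ECost, seg]

lemma seg_congr (N : V → ℕ) (μ : Finset V → ℝ) {c c' : V → ℕ} (h : ∀ j, c j = c' j)
    (M : List V) : seg N μ c M = seg N μ c' M := by
  have : c = c' := funext h
  rw [this]

lemma seg_append (N : V → ℕ) (μ : Finset V → ℝ) (c : V → ℕ) (M₁ M₂ : List V) :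
    seg N μ c (M₁ ++ M₂) = seg N μ c M₁ + seg N μ (fun j => c j + M₁.count j) M₂ := by
  rw [seg, List.length_append]
  rw [Finset.range_eq_Ico, ← Finset.sum_Ico_consecutive _ (Nat.zero_le M₁.length)
    (Nat.le_add_right _ _)]
  congr 1
  · rw [← Finset.range_eq_Ico, seg]
    apply Finset.sum_congr rfl
    intro t ht
    simp only [Finset.mem_range] at ht
    congr 1
    funext j
    rw [List.take_append, Nat.sub_eq_zero_of_le ht, List.take_zero,
      List.append_nil]
  · rw [seg, Finset.sum_Ico_eq_sum_range]
    apply Finset.sum_congr (by congr 1; omega)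
    intro t ht
    simp only [Finset.mem_range] at ht
    congr 1
    funext j
    rw [List.take_append,
      List.take_of_length_le (by omega : M₁.length ≤ M₁.length + t + 1),
      List.count_append,
      show M₁.length + t + 1 - M₁.length = t + 1 from by omega]
    omega

omit [Fintype V] in
lemma count_replicate' (i j : V) (n : ℕ) :
    (List.replicate n i).count j = if j = i then n else 0 := by
  rw [List.count_replicate]
  by_cases h : j = i
  · rw [if_pos h, if_pos (by rw [h, beq_self_eq_true])]
  · rw [if_neg h, if_neg (by simp [beq_iff_eq]; exact fun hh => h hh.symm)]

lemma seg_replicate (N : V → ℕ) (μ : Finset V → ℝ) (c : V → ℕ) (i : V) (p : ℕ) :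
    seg N μ c (List.replicate p i) =
      ∑ t ∈ Finset.range p, (Qbar N μ i c + (1 - ((c i + (t+1) : ℕ) : ℝ) / (N i : ℝ)) * Sfun N μ i c) := by
  rw [seg, List.length_replicate]
  apply Finset.sum_congr rfl
  intro t ht
  simp only [Finset.mem_range] at ht
  rw [show (fun j => c j + ((List.replicate p i).take (t + 1)).count j)
      = Function.update c i (c i + (t+1)) by
    funext j
    rw [List.take_replicate, count_replicate']
    by_cases h : j = i
    · subst h
      rw [Function.update_self, if_pos rfl]
      omega
    · rw [Function.update_of_ne h, if_neg h, Nat.add_zero]]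
  rw [Q_update]

lemma seg_block (N : V → ℕ) (μ : Finset V → ℝ) (c : V → ℕ) (i : V) (p : ℕ) (B : List V)
    (hiB : i ∉ B) :
    seg N μ (Function.update c i (c i + p)) B =
      ∑ b ∈ Finset.range B.length,
        (Qbar N μ i (fun j => c j + (B.take (b+1)).count j)
          + (1 - ((c i + p : ℕ) : ℝ) / (N i : ℝ)) * Sfun N μ i (fun j => c j + (B.take (b+1)).count j)) := by
  rw [seg]
  apply Finset.sum_congr rfl
  intro b hb
  rw [show (fun j => Function.update c i (c i + p) j + ((B.take (b+1)).count j))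
      = Function.update (fun j => c j + (B.take (b+1)).count j) i (c i + p) by
    funext j
    by_cases h : j = i
    · subst h
      rw [Function.update_self, Function.update_self,
        List.count_eq_zero_of_not_mem (fun hm => hiB (List.mem_of_mem_take hm)), Nat.add_zero]
    · rw [Function.update_of_ne h, Function.update_of_ne h]]
  rw [Q_update]

lemma concave_min {g : ℕ → ℝ} {n : ℕ}
    (h : ∀ p q, p ≤ q → q + 1 ≤ n → g (q+1) - g q ≤ g (p+1) - g p)
    (k : ℕ) (hkn : k ≤ n) : min (g 0) (g n) ≤ g k := by
  by_contra hcon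
  push_neg at hcon
  rw [lt_min_iff] at hcon
  obtain ⟨h0, hn⟩ := hcon
  have htele : ∑ p ∈ Finset.range k, (g (p+1) - g p) = g k - g 0 := Finset.sum_range_sub g k
  have hneg : ∃ p₀ ∈ Finset.range k, g (p₀+1) - g p₀ < 0 := by
    by_contra hall
    push_neg at hall
    have := Finset.sum_nonneg hall
    rw [htele] at this
    linarith
  obtain ⟨p₀, hp₀mem, hp₀⟩ := hneg
  simp only [Finset.mem_range] at hp₀mem
  have h2 : g n - g k = ∑ p ∈ Finset.Ico k n, (g (p+1) - g p) := by
    rw [Finset.sum_Ico_eq_sub _ hkn, Finset.sum_range_sub g, Finset.sum_range_sub g]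
    ring
  have h3 : ∑ p ∈ Finset.Ico k n, (g (p+1) - g p) ≤ 0 := by
    apply Finset.sum_nonpos
    intro p hp
    simp only [Finset.mem_Ico] at hp
    have := h p₀ p (by omega) (by omega)
    linarith
  linarith

lemma sum_affine (A B c : ℝ) (p : ℕ) :
    ∑ t ∈ Finset.range p, (A - B * (c + ((t:ℝ) + 1))) =
      (p:ℝ) * A - B * ((p:ℝ) * c + (p:ℝ) * ((p:ℝ)+1)/2) := by
  induction p with
  | zero => simp
  | succ q ih => rw [Finset.sum_range_succ, ih]; push_cast; ring

lemma middle_eval (N : V → ℕ) (μ : Finset V → ℝ) (c : V → ℕ) (i : V) (B S : List V)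
    (hiB : i ∉ B) (n p : ℕ) (hp : p ≤ n) :
    seg N μ c (List.replicate p i ++ (B ++ (List.replicate (n - p) i ++ S))) =
      (((p:ℝ) * (Qbar N μ i c + Sfun N μ i c)
        - (Sfun N μ i c / (N i : ℝ)) * ((p:ℝ) * (c i : ℝ) + (p:ℝ)*((p:ℝ)+1)/2))
      + ((∑ b ∈ Finset.range B.length, Qbar N μ i (fun j => c j + (B.take (b+1)).count j))
         + (1 - ((c i : ℝ) + (p:ℝ)) / (N i : ℝ))
           * (∑ b ∈ Finset.range B.length, Sfun N μ i (fun j => c j + (B.take (b+1)).count j)))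
      + ((((n-p : ℕ)):ℝ) * (Qbar N μ i (fun j => c j + B.count j) + Sfun N μ i (fun j => c j + B.count j))
        - (Sfun N μ i (fun j => c j + B.count j) / (N i : ℝ))
          * ((((n-p:ℕ)):ℝ) * ((c i : ℝ) + (p:ℝ)) + (((n-p:ℕ)):ℝ)*((((n-p:ℕ)):ℝ)+1)/2)))
      + seg N μ (Function.update (fun j => c j + B.count j) i (c i + n)) S := by
  have hcntB : B.count i = 0 := by
    rw [List.count_eq_zero]; exact hiB
  simp only [seg_append]
  have E1 : (fun j => c j + (List.replicate p i).count j) = Function.update c i (c i + p) := by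
    funext j
    rw [count_replicate']
    by_cases h : j = i
    · subst h; rw [Function.update_self, if_pos rfl]
    · rw [Function.update_of_ne h, if_neg h, Nat.add_zero]
  have E2 : (fun j => c j + (List.replicate p i).count j + B.count j)
      = Function.update (fun j => c j + B.count j) i (c i + p) := by
    funext j
    rw [count_replicate']
    by_cases h : j = i
    · subst h; rw [Function.update_self, if_pos rfl, hcntB]; omega
    · rw [Function.update_of_ne h, if_neg h, Nat.add_zero]
  have E3 : (fun j => c j + (List.replicate p i).count j + B.count j
        + (List.replicate (n - p) i).count j)
      = Function.update (fun j => c j + B.count j) i (c i + n) := by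
    funext j
    rw [count_replicate', count_replicate']
    by_cases h : j = i
    · subst h; rw [Function.update_self, if_pos rfl, if_pos rfl, hcntB]; omega
    · rw [Function.update_of_ne h, if_neg h, if_neg h]; omega
  rw [E1, E2, E3, seg_replicate, seg_block _ _ _ _ _ _ hiB, seg_replicate,
    Qbar_update, Sfun_update, Function.update_self]
  have h1 : ∑ t ∈ Finset.range p,
      (Qbar N μ i c + (1 - ((c i + (t+1) : ℕ) : ℝ) / (N i : ℝ)) * Sfun N μ i c)
      = ∑ t ∈ Finset.range p,
        ((Qbar N μ i c + Sfun N μ i c)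
          - (Sfun N μ i c / (N i : ℝ)) * ((c i : ℝ) + ((t:ℝ) + 1))) := by
    apply Finset.sum_congr rfl
    intro t _
    push_cast
    ring
  have h3 : ∑ t ∈ Finset.range (n - p),
      (Qbar N μ i (fun j => c j + B.count j)
        + (1 - ((c i + p + (t+1) : ℕ) : ℝ) / (N i : ℝ)) * Sfun N μ i (fun j => c j + B.count j))
      = ∑ t ∈ Finset.range (n - p),
        ((Qbar N μ i (fun j => c j + B.count j) + Sfun N μ i (fun j => c j + B.count j))
          - (Sfun N μ i (fun j => c j + B.count j) / (N i : ℝ))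
            * (((c i : ℝ) + (p:ℝ)) + ((t:ℝ) + 1))) := by
    apply Finset.sum_congr rfl
    intro t _
    push_cast
    ring
  rw [h1, h3, sum_affine, sum_affine, Finset.sum_add_distrib, ← Finset.mul_sum]
  push_cast
  ring

noncomputable def Gq (QB S0 SA SB Ai Si ES Ni ci : ℝ) (p q : ℝ) : ℝ :=
  ((p*(QB+S0) - S0/Ni*(p*ci + p*(p+1)/2))
   + (SA + (1 - (ci+p)/Ni)*SB)
   + (q*(Ai+Si) - Si/Ni*(q*(ci+p) + q*(q+1)/2))) + ES

lemma quad_key (QB S0 SA SB Ai Si ES Ni ci : ℝ) (hNi : 1 ≤ Ni) (hS : Si ≤ S0)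
    (kr ar : ℝ) (hk : 1 ≤ kr) (ha : 1 ≤ ar) :
    Gq QB S0 SA SB Ai Si ES Ni ci (kr+ar) 0 ≤ Gq QB S0 SA SB Ai Si ES Ni ci kr ar ∨
    Gq QB S0 SA SB Ai Si ES Ni ci 0 (kr+ar) ≤ Gq QB S0 SA SB Ai Si ES Ni ci kr ar := by
  by_contra hcon
  push_neg at hcon
  obtain ⟨h1, h2⟩ := hcon
  have hNi0 : (0:ℝ) < Ni := by linarith
  have key : Ni * (ar*(Gq QB S0 SA SB Ai Si ES Ni ci 0 (kr+ar) - Gq QB S0 SA SB Ai Si ES Ni ci kr ar)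
      + kr*(Gq QB S0 SA SB Ai Si ES Ni ci (kr+ar) 0 - Gq QB S0 SA SB Ai Si ES Ni ci kr ar))
      = -(kr*ar*(kr+ar))*(S0-Si)/2 := by
    unfold Gq
    field_simp
    ring
  have s1 : 0 < ar * (Gq QB S0 SA SB Ai Si ES Ni ci 0 (kr+ar) - Gq QB S0 SA SB Ai Si ES Ni ci kr ar) :=
    mul_pos (by linarith) (by linarith)
  have s2 : 0 < kr * (Gq QB S0 SA SB Ai Si ES Ni ci (kr+ar) 0 - Gq QB S0 SA SB Ai Si ES Ni ci kr ar) :=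
    mul_pos (by linarith) (by linarith)
  have s3 : 0 < Ni * (ar*(Gq QB S0 SA SB Ai Si ES Ni ci 0 (kr+ar) - Gq QB S0 SA SB Ai Si ES Ni ci kr ar)
      + kr*(Gq QB S0 SA SB Ai Si ES Ni ci (kr+ar) 0 - Gq QB S0 SA SB Ai Si ES Ni ci kr ar)) :=
    mul_pos hNi0 (by linarith)
  have s4 : 0 ≤ (kr*ar*(kr+ar))*(S0-Si)/2 := by
    apply div_nonneg _ (by norm_num)
    apply mul_nonneg _ (by linarith)
    have hkr : (0:ℝ) < kr := by linarith
    have har : (0:ℝ) < ar := by linarith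
    exact le_of_lt (mul_pos (mul_pos hkr har) (by linarith))
  linarith [key ▸ s3]

lemma exchange (N : V → ℕ) (hN : ∀ j, 1 ≤ N j) (μ : Finset V → ℝ) (hμ0 : ∀ T, 0 ≤ μ T)
    (P B S : List V) (i : V) (k a : ℕ) (hk : 1 ≤ k) (ha : 1 ≤ a) (hiB : i ∉ B)
    (hval : validPolicy N (P ++ (List.replicate k i ++ (B ++ (List.replicate a i ++ S))))) :
    ECost N μ (P ++ (List.replicate (k+a) i ++ (B ++ S)))
        ≤ ECost N μ (P ++ (List.replicate k i ++ (B ++ (List.replicate a i ++ S)))) ∨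
    ECost N μ (P ++ (B ++ (List.replicate (k+a) i ++ S)))
        ≤ ECost N μ (P ++ (List.replicate k i ++ (B ++ (List.replicate a i ++ S)))) := by
  classical
  set n := k + a with hn
  -- the seven real constants
  set cP : V → ℕ := fun j => P.count j with hcP
  set QB := Qbar N μ i cP with hQB
  set S0 := Sfun N μ i cP with hS0
  set SA := ∑ b ∈ Finset.range B.length, Qbar N μ i (fun j => cP j + (B.take (b+1)).count j) with hSA
  set SB := ∑ b ∈ Finset.range B.length, Sfun N μ i (fun j => cP j + (B.take (b+1)).count j) with hSB
  set Ai := Qbar N μ i (fun j => cP j + B.count j) with hAi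
  set Si := Sfun N μ i (fun j => cP j + B.count j) with hSi
  set ES := seg N μ (Function.update (fun j => cP j + B.count j) i (cP i + n)) S with hES
  have hbase : ∀ M : List V, ECost N μ (P ++ M)
      = seg N μ (fun _ => 0) P + seg N μ cP M := by
    intro M
    rw [ECost_eq_seg, seg_append]
    congr 1
    apply seg_congr
    intro j
    simp [hcP]
  have hmid : ∀ p, p ≤ n →
      seg N μ cP (List.replicate p i ++ (B ++ (List.replicate (n - p) i ++ S)))
        = Gq QB S0 SA SB Ai Si ES (N i : ℝ) (cP i : ℝ) (p : ℝ) ((n - p : ℕ) : ℝ) := by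
    intro p hp
    rw [middle_eval N μ cP i B S hiB n p hp]
    rfl
  have h0 : ECost N μ (P ++ (B ++ (List.replicate (k+a) i ++ S)))
      = seg N μ (fun _ => 0) P + Gq QB S0 SA SB Ai Si ES (N i : ℝ) (cP i : ℝ) 0 ((k:ℝ) + (a:ℝ)) := by
    have : (P ++ (B ++ (List.replicate (k+a) i ++ S)))
        = P ++ (List.replicate 0 i ++ (B ++ (List.replicate (n - 0) i ++ S))) := by
      simp [hn]
    rw [this, hbase, hmid 0 (Nat.zero_le n)]
    norm_num [hn]
  have hkk : ECost N μ (P ++ (List.replicate k i ++ (B ++ (List.replicate a i ++ S))))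
      = seg N μ (fun _ => 0) P + Gq QB S0 SA SB Ai Si ES (N i : ℝ) (cP i : ℝ) (k:ℝ) (a:ℝ) := by
    have : (P ++ (List.replicate k i ++ (B ++ (List.replicate a i ++ S))))
        = P ++ (List.replicate k i ++ (B ++ (List.replicate (n - k) i ++ S))) := by
      simp [hn]
    rw [this, hbase, hmid k (by omega)]
    rw [show ((n - k : ℕ) : ℝ) = (a:ℝ) by rw [hn]; norm_num]
  have hnn : ECost N μ (P ++ (List.replicate (k+a) i ++ (B ++ S)))
      = seg N μ (fun _ => 0) P + Gq QB S0 SA SB Ai Si ES (N i : ℝ) (cP i : ℝ) ((k:ℝ)+(a:ℝ)) 0 := by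
    have : (P ++ (List.replicate (k+a) i ++ (B ++ S)))
        = P ++ (List.replicate n i ++ (B ++ (List.replicate (n - n) i ++ S))) := by
      simp [hn]
    rw [this, hbase, hmid n le_rfl]
    norm_num [hn]
  have hNi : (1:ℝ) ≤ (N i : ℝ) := by exact_mod_cast hN i
  have hSmono : Si ≤ S0 := by
    rw [hSi, hS0]
    apply Sfun_mono N μ hμ0 hN i
    · intro j; omega
    · intro j hji
      show List.count j P + List.count j B ≤ N j
      have := hval j
      rw [List.count_append, List.count_append, List.count_append, List.count_append,
        count_replicate', count_replicate', if_neg hji, if_neg hji] at this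
      omega
  have := quad_key QB S0 SA SB Ai Si ES (N i : ℝ) (cP i : ℝ) hNi hSmono (k:ℝ) (a:ℝ)
    (by exact_mod_cast hk) (by exact_mod_cast ha)
  rcases this with h | h
  · left; rw [hnn, hkk]; linarith
  · right; rw [h0, hkk]; linarith

section ListLemmas
variable {α : Type*} [DecidableEq α]

lemma dropWhile_append_all {p : α → Bool} {A C : List α} (h : ∀ x ∈ A, p x = true) :
    List.dropWhile p (A ++ C) = List.dropWhile p C := by
  rw [List.dropWhile_append, if_pos]
  rw [List.isEmpty_iff, List.dropWhile_eq_nil_iff]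
  exact h

lemma dropWhile_append_ne {p : α → Bool} {A : List α} (C : List α)
    (h : List.dropWhile p A ≠ []) :
    List.dropWhile p (A ++ C) = List.dropWhile p A ++ C := by
  rw [List.dropWhile_append, if_neg]
  rw [List.isEmpty_iff]
  exact h

lemma takeWhile_append_all {p : α → Bool} {A C : List α} (h : ∀ x ∈ A, p x = true) :
    List.takeWhile p (A ++ C) = A ++ List.takeWhile p C := by
  rw [List.takeWhile_append, if_pos]
  rw [List.takeWhile_eq_self_iff.2 h]

lemma takeWhile_append_ne {p : α → Bool} {A : List α} (C : List α)
    (h : List.dropWhile p A ≠ []) :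
    List.takeWhile p (A ++ C) = List.takeWhile p A := by
  rw [List.takeWhile_append, if_neg]
  intro hlen
  have hself : List.takeWhile p A = A :=
    (List.takeWhile_prefix p).eq_of_length hlen
  rw [List.takeWhile_eq_self_iff] at hself
  exact h (List.dropWhile_eq_nil_iff.2 hself)

def FR (i : α) (L : List α) : ℕ :=
  ((L.dropWhile (fun x => !(x == i))).takeWhile (fun x => x == i)).length

def fg (i : α) (L : List α) : ℕ :=
  ((L.dropWhile (fun x => !(x == i))).dropWhile (fun x => x == i)).count i

lemma count_eq_FR_add_fg (i : α) (L : List α) : L.count i = FR i L + fg i L := by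
  have h1 : L.count i = (L.dropWhile (fun x => !(x == i))).count i := by
    conv_lhs => rw [← List.takeWhile_append_dropWhile (p := fun x => !(x == i)) (l := L)]
    rw [List.count_append, List.count_eq_zero.2 (fun hmem => by
      have h := List.mem_takeWhile_imp hmem
      have h' : (!(i == i)) = true := h
      rw [beq_self_eq_true i] at h'
      exact absurd h' (by decide)), Nat.zero_add]
  set D := L.dropWhile (fun x => !(x == i)) with hD
  have h2 : D.count i = (D.takeWhile (fun x => x == i)).count i
      + (D.dropWhile (fun x => x == i)).count i := by
    conv_lhs => rw [← List.takeWhile_append_dropWhile (p := (fun x => x == i)) (l := D)]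
    rw [List.count_append]
  have h3 : (D.takeWhile (fun x => x == i)).count i = (D.takeWhile (fun x => x == i)).length := by
    rw [List.count_eq_length]
    intro b hb
    have h := List.mem_takeWhile_imp hb
    exact (eq_of_beq h).symm
  rw [h1, h2, h3, FR, fg]
end ListLemmas

section Decomp
variable {α : Type*} [DecidableEq α]

lemma pj_replicate {i j : α} (hij : i ≠ j) (m : ℕ) :
    ∀ x ∈ List.replicate m i, (!(x == j)) = true := by
  intro x hx
  rw [List.eq_of_mem_replicate hx]
  simp [hij]

lemma takeWhile_qj_replicate {i j : α} (hij : i ≠ j) {m : ℕ} (hm : 1 ≤ m) (X : List α) :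
    List.takeWhile (fun x => x == j) (List.replicate m i ++ X) = [] := by
  obtain ⟨m', rfl⟩ : ∃ m', m = m' + 1 := ⟨m - 1, by omega⟩
  rw [List.replicate_succ, List.cons_append, List.takeWhile_cons_of_neg]
  simp [hij]

lemma dropWhile_pj_replicate {i j : α} (hij : i ≠ j) (m : ℕ) (X : List α) :
    List.dropWhile (fun x => !(x == j)) (List.replicate m i ++ X)
      = List.dropWhile (fun x => !(x == j)) X :=
  dropWhile_append_all (pj_replicate hij m)

lemma dropWhile_qi_replicate (i : α) (m : ℕ) (X : List α) :
    List.dropWhile (fun x => x == i) (List.replicate m i ++ X)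
      = List.dropWhile (fun x => x == i) X := by
  apply dropWhile_append_all
  intro x hx
  rw [List.eq_of_mem_replicate hx]
  simp

lemma takeWhile_dropWhile_ne_nil {α : Type*} {p q : α → Bool}
    (hpq : ∀ x, p x = false → q x = true) :
    ∀ (L : List α), L.dropWhile p ≠ [] → (L.dropWhile p).takeWhile q ≠ [] := by
  intro L
  induction L with
  | nil => intro h; exact absurd rfl h
  | cons a l ih =>
    intro h
    by_cases hpa : p a = true
    · rw [List.dropWhile_cons_of_pos hpa] at h ⊢
      exact ih h
    · have hpa' : p a = false := by
        cases hp : p a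
        · rfl
        · exact absurd hp hpa
      rw [List.dropWhile_cons_of_neg hpa] at h ⊢
      rw [List.takeWhile_cons_of_pos (hpq a hpa')]
      simp

lemma dropWhile_idem {α : Type*} {p : α → Bool} (L : List α) :
    (L.dropWhile p).dropWhile p = L.dropWhile p := by
  induction L with
  | nil => rfl
  | cons a l ih =>
    by_cases hpa : p a = true
    · rw [List.dropWhile_cons_of_pos hpa]; exact ih
    · rw [List.dropWhile_cons_of_neg hpa, List.dropWhile_cons_of_neg hpa]

lemma decomp (i : α) (L : List α) (hgap : fg i L ≠ 0) :
    ∃ (P B S : List α) (k a : ℕ),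
      1 ≤ k ∧ 1 ≤ a ∧ i ∉ P ∧ i ∉ B ∧ B ≠ [] ∧
      List.dropWhile (fun x => x == i) S = S ∧
      L = P ++ (List.replicate k i ++ (B ++ (List.replicate a i ++ S))) := by
  classical
  set pi' : α → Bool := fun x => !(x == i) with hpi
  set qi : α → Bool := fun x => x == i with hqi
  have hpq : ∀ x, pi' x = false → qi x = true := by
    intro x hx
    simp only [hpi, Bool.not_eq_false'] at hx
    exact hx
  have hqp : ∀ x, qi x = false → pi' x = true := by
    intro x hx
    simp only [hpi, hqi] at *
    rw [hx]
    rfl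
  have hmem_pi : ∀ (X : List α) (x : α), x ∈ X.takeWhile pi' → x ≠ i := by
    intro X x hx
    have := List.mem_takeWhile_imp hx
    simpa [hpi] using this
  have hmem_qi : ∀ (X : List α) (x : α), x ∈ X.takeWhile qi → x = i := by
    intro X x hx
    have := List.mem_takeWhile_imp hx
    simpa [hqi] using this
  set P := L.takeWhile pi' with hP
  set L1 := L.dropWhile pi' with hL1
  set R1 := L1.takeWhile qi with hR1
  set L2 := L1.dropWhile qi with hL2
  set B := L2.takeWhile pi' with hB
  set L3 := L2.dropWhile pi' with hL3
  set R2 := L3.takeWhile qi with hR2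
  set S := L3.dropWhile qi with hS
  have hL2count : L2.count i ≠ 0 := hgap
  have hiL2 : i ∈ L2 := by
    by_contra h
    exact hL2count (List.count_eq_zero.2 h)
  have hiL3 : i ∈ L3 := by
    have he : B ++ L3 = L2 := List.takeWhile_append_dropWhile (p := pi') (l := L2)
    rw [← he] at hiL2
    rcases List.mem_append.1 hiL2 with h | h
    · exact absurd rfl (hmem_pi L2 i h)
    · exact h
  have hL3ne : L3 ≠ [] := by rintro h; rw [h] at hiL3; simp at hiL3
  have hL2ne : L2 ≠ [] := by rintro h; rw [h] at hiL2; simp at hiL2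
  have hL1ne : L1 ≠ [] := by
    intro h
    have : L2 = [] := by rw [hL2, h]; rfl
    exact hL2ne this
  have hR1rep : R1 = List.replicate R1.length i := by
    rw [List.eq_replicate_iff]
    exact ⟨rfl, fun b hb => hmem_qi L1 b hb⟩
  have hR2rep : R2 = List.replicate R2.length i := by
    rw [List.eq_replicate_iff]
    exact ⟨rfl, fun b hb => hmem_qi L3 b hb⟩
  have hR1ne : R1 ≠ [] := takeWhile_dropWhile_ne_nil hpq L hL1ne
  have hR2ne : R2 ≠ [] := takeWhile_dropWhile_ne_nil hpq L2 hL3ne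
  have hBne : B ≠ [] := takeWhile_dropWhile_ne_nil hqp L1 hL2ne
  refine ⟨P, B, S, R1.length, R2.length, ?_, ?_, ?_, ?_, hBne, ?_, ?_⟩
  · have : R1.length ≠ 0 := fun h => hR1ne (List.eq_nil_of_length_eq_zero h)
    omega
  · have : R2.length ≠ 0 := fun h => hR2ne (List.eq_nil_of_length_eq_zero h)
    omega
  · intro h; exact absurd rfl (hmem_pi L i h)
  · intro h; exact absurd rfl (hmem_pi L2 i h)
  · exact dropWhile_idem L3
  · rw [← hR1rep, ← hR2rep]
    have e1 : P ++ L1 = L := List.takeWhile_append_dropWhile (p := pi') (l := L)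
    have e2 : R1 ++ L2 = L1 := List.takeWhile_append_dropWhile (p := qi) (l := L1)
    have e3 : B ++ L3 = L2 := List.takeWhile_append_dropWhile (p := pi') (l := L2)
    have e4 : R2 ++ S = L3 := List.takeWhile_append_dropWhile (p := qi) (l := L3)
    rw [← e1, ← e2, ← e3, ← e4]

end Decomp

section Measure
variable {α : Type*} [DecidableEq α]

lemma dropWhile_pi_replicate_ne {i : α} {k : ℕ} (hk : 1 ≤ k) (X : List α) :
    List.dropWhile (fun x => !(x == i)) (List.replicate k i ++ X)
      = List.replicate k i ++ X := by
  obtain ⟨k', rfl⟩ : ∃ k', k = k' + 1 := ⟨k - 1, by omega⟩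
  rw [List.replicate_succ, List.cons_append, List.dropWhile_cons_of_neg (by simp)]

lemma dropWhile_qi_cons_ne {i : α} {B : List α} (hiB : i ∉ B) (hBne : B ≠ []) (X : List α) :
    List.dropWhile (fun x => x == i) (B ++ X) = B ++ X := by
  obtain ⟨b, B', rfl⟩ := List.exists_cons_of_ne_nil hBne
  rw [List.cons_append, List.dropWhile_cons_of_neg]
  simp only [beq_iff_eq]
  simp only [List.mem_cons, not_or] at hiB
  intro h
  exact hiB.1 (by rw [h])

lemma all_pi_of_not_mem {i : α} {P : List α} (h : i ∉ P) :
    ∀ x ∈ P, (!(x == i)) = true := by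
  intro x hx
  simp only [Bool.not_eq_true', beq_eq_false_iff_ne]
  rintro rfl
  exact h hx

/-- `fg i` values of the three lists. -/
lemma fg_i_vals (i : α) (P B S : List α) (k a : ℕ) (hk : 1 ≤ k) (ha : 1 ≤ a)
    (hiP : i ∉ P) (hiB : i ∉ B) (hBne : B ≠ [])
    (hSdrop : List.dropWhile (fun x => x == i) S = S) :
    fg i (P ++ (List.replicate k i ++ (B ++ (List.replicate a i ++ S)))) = a + S.count i ∧
    fg i (P ++ (List.replicate (k+a) i ++ (B ++ S))) = S.count i ∧
    fg i (P ++ (B ++ (List.replicate (k+a) i ++ S))) = S.count i := by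
  have hcB : B.count i = 0 := List.count_eq_zero.2 hiB
  refine ⟨?_, ?_, ?_⟩
  · rw [fg, dropWhile_append_all (all_pi_of_not_mem hiP), dropWhile_pi_replicate_ne hk,
      dropWhile_qi_replicate, dropWhile_qi_cons_ne hiB hBne,
      List.count_append, List.count_append, count_replicate', if_pos rfl, hcB]
    omega
  · rw [fg, dropWhile_append_all (all_pi_of_not_mem hiP), dropWhile_pi_replicate_ne (by omega),
      dropWhile_qi_replicate, dropWhile_qi_cons_ne hiB hBne, List.count_append, hcB]
    omega
  · rw [fg, dropWhile_append_all (all_pi_of_not_mem hiP),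
      dropWhile_append_all (all_pi_of_not_mem hiB), dropWhile_pi_replicate_ne (by omega),
      dropWhile_qi_replicate, hSdrop]

lemma FR_ge (i j : α) (hij : i ≠ j) (P B S : List α) (k a : ℕ) (hk : 1 ≤ k) (ha : 1 ≤ a) :
    FR j (P ++ (List.replicate k i ++ (B ++ (List.replicate a i ++ S))))
      ≤ FR j (P ++ (List.replicate (k+a) i ++ (B ++ S))) ∧
    FR j (P ++ (List.replicate k i ++ (B ++ (List.replicate a i ++ S))))
      ≤ FR j (P ++ (B ++ (List.replicate (k+a) i ++ S))) := by
  classical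
  set pj : α → Bool := fun x => !(x == j) with hpj
  set qj : α → Bool := fun x => x == j with hqj
  by_cases hjP : j ∈ P
  · have hdP : P.dropWhile pj ≠ [] := by
      rw [Ne, List.dropWhile_eq_nil_iff]
      push_neg
      exact ⟨j, hjP, by simp [hpj]⟩
    rw [FR, FR, FR, dropWhile_append_ne _ hdP, dropWhile_append_ne _ hdP,
      dropWhile_append_ne _ hdP]
    by_cases hq : (P.dropWhile pj).dropWhile qj = []
    · have hall : ∀ x ∈ P.dropWhile pj, qj x = true := List.dropWhile_eq_nil_iff.1 hq
      rw [takeWhile_append_all hall, takeWhile_append_all hall, takeWhile_append_all hall,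
        takeWhile_qj_replicate hij hk, takeWhile_qj_replicate hij (by omega : 1 ≤ k + a)]
      constructor
      · simp
      · simp
    · rw [takeWhile_append_ne _ hq, takeWhile_append_ne _ hq, takeWhile_append_ne _ hq]
      exact ⟨le_rfl, le_rfl⟩
  · have hPall : ∀ x ∈ P, pj x = true := by
      intro x hx
      simp only [hpj, Bool.not_eq_true', beq_eq_false_iff_ne]
      rintro rfl
      exact hjP hx
    by_cases hjB : j ∈ B
    · have hdB : B.dropWhile pj ≠ [] := by
        rw [Ne, List.dropWhile_eq_nil_iff]
        push_neg
        exact ⟨j, hjB, by simp [hpj]⟩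
      rw [FR, FR, FR, dropWhile_append_all hPall, dropWhile_append_all hPall,
        dropWhile_append_all hPall, dropWhile_pj_replicate hij,
        dropWhile_pj_replicate hij, dropWhile_append_ne _ hdB, dropWhile_append_ne _ hdB,
        dropWhile_append_ne _ hdB]
      by_cases hq : (B.dropWhile pj).dropWhile qj = []
      · have hall : ∀ x ∈ B.dropWhile pj, qj x = true := List.dropWhile_eq_nil_iff.1 hq
        rw [takeWhile_append_all hall, takeWhile_append_all hall, takeWhile_append_all hall,
          takeWhile_qj_replicate hij ha, takeWhile_qj_replicate hij (by omega : 1 ≤ k + a)]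
        constructor
        · simp
        · simp
      · rw [takeWhile_append_ne _ hq, takeWhile_append_ne _ hq, takeWhile_append_ne _ hq]
        exact ⟨le_rfl, le_rfl⟩
    · have hBall : ∀ x ∈ B, pj x = true := by
        intro x hx
        simp only [hpj, Bool.not_eq_true', beq_eq_false_iff_ne]
        rintro rfl
        exact hjB hx
      rw [FR, FR, FR, dropWhile_append_all hPall, dropWhile_append_all hPall,
        dropWhile_append_all hPall, dropWhile_pj_replicate hij, dropWhile_pj_replicate hij,
        dropWhile_append_all hBall, dropWhile_append_all hBall,
        dropWhile_pj_replicate hij, dropWhile_append_all hBall, dropWhile_pj_replicate hij]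
      exact ⟨le_rfl, le_rfl⟩
end Measure

section Blocky
variable {α : Type*} [DecidableEq α]

lemma flatMap_congr' {β : Type*} {f g : α → List β} :
    ∀ (l : List α), (∀ x ∈ l, f x = g x) → l.flatMap f = l.flatMap g := by
  intro l
  induction l with
  | nil => intro _; rfl
  | cons b l ih =>
    intro h
    rw [List.flatMap_cons, List.flatMap_cons, h b (by simp), ih (fun x hx => h x (by simp [hx]))]

lemma counts_pres (i j : α) (P B S : List α) (k a : ℕ) :
    (P ++ (List.replicate (k+a) i ++ (B ++ S))).count j
      = (P ++ (List.replicate k i ++ (B ++ (List.replicate a i ++ S)))).count j ∧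
    (P ++ (B ++ (List.replicate (k+a) i ++ S))).count j
      = (P ++ (List.replicate k i ++ (B ++ (List.replicate a i ++ S)))).count j := by
  constructor <;>
  · simp only [List.count_append, count_replicate']
    by_cases h : j = i
    · simp only [if_pos h]; omega
    · simp only [if_neg h]; omega

lemma blocky_struct : ∀ (n : ℕ) (L : List α), L.length ≤ n → (∀ j : α, fg j L = 0) →
    ∃ l : List α, l.Nodup ∧ (∀ j, j ∈ l ↔ j ∈ L) ∧
      L = l.flatMap (fun x => List.replicate (L.count x) x) := by
  intro n
  induction n with
  | zero =>
    intro L hlen _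
    have : L = [] := List.eq_nil_of_length_eq_zero (by omega)
    subst this
    exact ⟨[], List.nodup_nil, by simp, by simp⟩
  | succ n ih =>
    intro L hlen hfg
    cases L with
    | nil => exact ⟨[], List.nodup_nil, by simp, by simp⟩
    | cons b L' =>
      set L := b :: L' with hLdef
      set T := L.takeWhile (fun x => x == b) with hT
      set R := L.dropWhile (fun x => x == b) with hR
      have hTR : T ++ R = L := List.takeWhile_append_dropWhile
      have hTall : ∀ x ∈ T, x = b := by
        intro x hx
        have := List.mem_takeWhile_imp hx
        simpa using this
      have hTne : T ≠ [] := by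
        rw [hT, hLdef, List.takeWhile_cons_of_pos (by simp)]
        simp
      have hdropL : L.dropWhile (fun x => !(x == b)) = L := by
        rw [hLdef, List.dropWhile_cons_of_neg (by simp)]
      have hcbR : R.count b = 0 := by
        have := hfg b
        rw [fg, hdropL] at this
        exact this
      have hbR : b ∉ R := List.count_eq_zero.1 hcbR
      have hfgR : ∀ j, fg j R = 0 := by
        intro j
        by_cases hjb : j = b
        · subst hjb
          have hsub : ((R.dropWhile (fun x => !(x == j))).dropWhile (fun x => x == j)).Sublist R :=
            (List.dropWhile_sublist _).trans (List.dropWhile_sublist _)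
          have := hsub.count_le j
          rw [fg]
          omega
        · have := hfg j
          rw [fg, ← hTR, dropWhile_append_all (by
            intro x hx
            rw [hTall x hx]
            simp only [Bool.not_eq_true', beq_eq_false_iff_ne]
            exact fun hh => hjb hh.symm)] at this
          rw [fg]
          exact this
      have hlenR : R.length ≤ n := by
        have h1 : T.length + R.length = L.length := by rw [← hTR]; simp
        have h2 : 1 ≤ T.length := by
          rcases T with _ | ⟨x, X⟩
          · exact absurd rfl hTne
          · simp
        simp only [hLdef, List.length_cons] at h1 hlen
        omega
      obtain ⟨l', hnodup', hmem', hflat'⟩ := ih R hlenR hfgR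
      have hbl' : b ∉ l' := fun h => hbR ((hmem' b).1 h)
      have hcountT : T.count b = T.length := by
        rw [List.count_eq_length]
        intro x hx
        exact (hTall x hx).symm
      have hcbL : L.count b = T.length := by
        rw [← hTR, List.count_append]
        omega
      have hTrep : T = List.replicate (L.count b) b := by
        rw [List.eq_replicate_iff]
        exact ⟨by omega, hTall⟩
      refine ⟨b :: l', List.nodup_cons.2 ⟨hbl', hnodup'⟩, ?_, ?_⟩
      · intro j
        constructor
        · intro hj
          rcases List.mem_cons.1 hj with h | h
          · subst h; exact List.mem_cons_self
          · have hjR := (hmem' j).1 h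
            rw [← hTR]
            exact List.mem_append.2 (Or.inr hjR)
        · intro hj
          rw [← hTR] at hj
          rcases List.mem_append.1 hj with h | h
          · exact List.mem_cons.2 (Or.inl (hTall j h))
          · exact List.mem_cons.2 (Or.inr ((hmem' j).2 h))
      · rw [List.flatMap_cons, ← hTrep]
        nth_rewrite 1 [← hTR]
        congr 1
        rw [hflat']
        apply flatMap_congr'
        intro x hx
        have hxb : x ≠ b := fun h => hbl' (h ▸ hx)
        have hcT : T.count x = 0 := by
          rw [List.count_eq_zero]
          intro hmem
          exact hxb (hTall x hmem)
        have : L.count x = R.count x := by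
          rw [← hTR, List.count_append]
          omega
        rw [this]
end Blocky

lemma base_case (N : V → ℕ) (hN : ∀ i, 1 ≤ N i) (μ : Finset V → ℝ) (L : List V)
    (hval : validPolicy N L) (hfg : ∀ j : V, fg j L = 0) :
    ∃ v : Fin (Fintype.card V) → V, Function.Bijective v ∧
      ECost N μ ((List.ofFn v).flatMap (fun i => List.replicate (N i) i)) ≤ ECost N μ L := by
  classical
  obtain ⟨l, hnodup, hmem, hflat⟩ := blocky_struct L.length L le_rfl hfg
  have hallmem : ∀ j : V, j ∈ L := by
    intro j
    have h1 : L.count j = N j := hval j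
    have h2 : 0 < L.count j := by have := hN j; omega
    exact List.count_pos_iff.1 h2
  have htofin : l.toFinset = univ :=
    Finset.eq_univ_iff_forall.2 (fun j => List.mem_toFinset.2 ((hmem j).2 (hallmem j)))
  have hlen : l.length = Fintype.card V := by
    rw [← List.toFinset_card_of_nodup hnodup, htofin, Finset.card_univ]
  refine ⟨fun t => l.get (Fin.cast hlen.symm t), ?_, ?_⟩
  · rw [Fintype.bijective_iff_injective_and_card]
    constructor
    · exact (List.nodup_iff_injective_get.1 hnodup).comp (Fin.cast_injective hlen.symm)
    · simp
  · have hofn : List.ofFn (fun t => l.get (Fin.cast hlen.symm t)) = l := by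
      apply List.ext_getElem
      · simp [hlen]
      · intro t h1 h2
        rw [List.getElem_ofFn]
        simp [List.get_eq_getElem]
    rw [hofn]
    apply le_of_eq
    congr 1
    rw [hflat]
    apply flatMap_congr'
    intro x hx
    rw [← hval x]

lemma main_aux (N : V → ℕ) (hN : ∀ i, 1 ≤ N i) (μ : Finset V → ℝ) (hμ0 : ∀ T, 0 ≤ μ T) :
    ∀ (m : ℕ) (L : List V), validPolicy N L → (∑ j ∈ univ, fg j L) ≤ m →
    ∃ v : Fin (Fintype.card V) → V, Function.Bijective v ∧
      ECost N μ ((List.ofFn v).flatMap (fun i => List.replicate (N i) i)) ≤ ECost N μ L := by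
  intro m
  induction m with
  | zero =>
    intro L hval hm
    have hfg : ∀ j : V, fg j L = 0 := by
      intro j
      have h1 : fg j L ≤ ∑ j ∈ univ, fg j L :=
        Finset.single_le_sum (f := fun j => fg j L) (fun _ _ => Nat.zero_le _) (Finset.mem_univ j)
      omega
    exact base_case N hN μ L hval hfg
  | succ m ih =>
    intro L hval hm
    by_cases h0 : ∑ j ∈ univ, fg j L = 0
    · have hfg : ∀ j : V, fg j L = 0 := by
        intro j
        have h1 : fg j L ≤ ∑ j ∈ univ, fg j L :=
          Finset.single_le_sum (f := fun j => fg j L) (fun _ _ => Nat.zero_le _) (Finset.mem_univ j)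
        omega
      exact base_case N hN μ L hval hfg
    · have hex : ∃ i : V, fg i L ≠ 0 := by
        by_contra hall
        push_neg at hall
        exact h0 (Finset.sum_eq_zero (fun j _ => hall j))
      obtain ⟨i, hi⟩ := hex
      obtain ⟨P, B, S, k, a, hk, ha, hiP, hiB, hBne, hSdrop, hL⟩ := decomp i L hi
      subst hL
      have hvalLl : validPolicy N (P ++ (List.replicate (k+a) i ++ (B ++ S))) := fun j => by
        rw [(counts_pres i j P B S k a).1]; exact hval j
      have hvalLr : validPolicy N (P ++ (B ++ (List.replicate (k+a) i ++ S))) := fun j => by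
        rw [(counts_pres i j P B S k a).2]; exact hval j
      obtain ⟨hfi0, hfil, hfir⟩ := fg_i_vals i P B S k a hk ha hiP hiB hBne hSdrop
      have hfle : ∀ j : V, j ≠ i →
          fg j (P ++ (List.replicate (k+a) i ++ (B ++ S)))
            ≤ fg j (P ++ (List.replicate k i ++ (B ++ (List.replicate a i ++ S)))) ∧
          fg j (P ++ (B ++ (List.replicate (k+a) i ++ S)))
            ≤ fg j (P ++ (List.replicate k i ++ (B ++ (List.replicate a i ++ S)))) := by
        intro j hj
        have hFR := FR_ge i j (fun h => hj h.symm) P B S k a hk ha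
        have hc1 := (counts_pres i j P B S k a).1
        have hc2 := (counts_pres i j P B S k a).2
        have e0 := count_eq_FR_add_fg j (P ++ (List.replicate k i ++ (B ++ (List.replicate a i ++ S))))
        have e1 := count_eq_FR_add_fg j (P ++ (List.replicate (k+a) i ++ (B ++ S)))
        have e2 := count_eq_FR_add_fg j (P ++ (B ++ (List.replicate (k+a) i ++ S)))
        exact ⟨by omega, by omega⟩
      have hmeas : ∀ L' : List V, (fg i L' = S.count i) →
          (∀ j : V, j ≠ i → fg j L'
            ≤ fg j (P ++ (List.replicate k i ++ (B ++ (List.replicate a i ++ S))))) →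
          ∑ j ∈ univ, fg j L' ≤ m := by
        intro L' hfi' hfle'
        have hlt : ∑ j ∈ univ, fg j L'
            < ∑ j ∈ univ, fg j (P ++ (List.replicate k i ++ (B ++ (List.replicate a i ++ S)))) := by
          apply Finset.sum_lt_sum
          · intro j _
            by_cases hj : j = i
            · subst hj; omega
            · exact hfle' j hj
          · exact ⟨i, Finset.mem_univ i, by omega⟩
        omega
      have hexch := exchange N hN μ hμ0 P B S i k a hk ha hiB hval
      rcases hexch with hle | hle
      · obtain ⟨v, hv, hcost⟩ := ih (P ++ (List.replicate (k+a) i ++ (B ++ S))) hvalLl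
          (hmeas _ hfil (fun j hj => (hfle j hj).1))
        exact ⟨v, hv, le_trans hcost hle⟩
      · obtain ⟨v, hv, hcost⟩ := ih (P ++ (B ++ (List.replicate (k+a) i ++ S))) hvalLr
          (hmeas _ hfir (fun j hj => (hfle j hj).2))
        exact ⟨v, hv, le_trans hcost hle⟩

/-- **Block Policy Optimality** (Theorem 2 of the paper): in every multi-urn
search model there exists an ordering of the urns whose block policy is
optimal among all valid policies. -/
theorem block_policy_optimality (N : V → ℕ) (hN : ∀ i, 1 ≤ N i)
    (μ : Finset V → ℝ) (hμ0 : ∀ T, 0 ≤ μ T) (hμ1 : ∑ T : Finset V, μ T = 1) :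
    ∃ v : Fin (Fintype.card V) → V, Function.Bijective v ∧
      ∀ L : List V, validPolicy N L → ECost N μ (blockPolicy N v) ≤ ECost N μ L := by
  classical
  have hne : Nonempty {v : Fin (Fintype.card V) → V // Function.Bijective v} :=
    ⟨⟨(Fintype.equivFin V).symm, (Fintype.equivFin V).symm.bijective⟩⟩
  obtain ⟨v0, hv0⟩ := Finite.exists_min
    (α := {v : Fin (Fintype.card V) → V // Function.Bijective v})
    (fun v => ECost N μ (blockPolicy N v.1))
  refine ⟨v0.1, v0.2, ?_⟩
  intro L hL
  obtain ⟨v, hv, hle⟩ := main_aux N hN μ hμ0 (∑ j ∈ univ, fg j L) L hL le_rfl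
  have h1 : ECost N μ (blockPolicy N v0.1) ≤ ECost N μ (blockPolicy N v) := hv0 ⟨v, hv⟩
  have h2 : blockPolicy N v = (List.ofFn v).flatMap (fun i => List.replicate (N i) i) := rfl
  rw [h2] at h1
  exact le_trans h1 hle
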